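/- Let 1 < p < 2. There exists a constant c_p > 0 such that for all x, y ∈ ℝⁿ, ⟨|x|^{p-2}x - |y|^{p-2}y, x - y⟩ ≥ c_p |x - y|² (|x| + |y|)^{p-2}, where the right-hand side is interpreted as 0 when x = y = 0. -/

import Mathlib

open Real

/-- MVT-based lemma: for `0 ≤ b ≤ a` and `0 < q < 1`, `q * (a-b) * a^(q-1) ≤ a^q - b^q`. -/
private lemma lemA {q a b : ℝ} (hq0 : 0 < q) (hq1 : q < 1) (hb : 0 ≤ b) (hba : b ≤ a) :
    q * (a - b) * a ^ (q - 1) ≤ a ^ q - b ^ q := by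
  rcases eq_or_lt_of_le hba with rfl | hlt
  · simp
  have ha : 0 < a := lt_of_le_of_lt hb hlt
  obtain ⟨c, hc, hceq⟩ := exists_hasDerivAt_eq_slope (fun x => x ^ q)
      (fun x => q * x ^ (q - 1)) hlt
      (by
        intro x hx
        exact (Real.continuousAt_rpow_const x q (Or.inr hq0.le)).continuousWithinAt)
      (by
        intro x hx
        have hx0 : x ≠ 0 := ne_of_gt (lt_of_le_of_lt hb hx.1)
        simpa [mul_comm] using Real.hasDerivAt_rpow_const (p := q) (Or.inl hx0))
  have hc0 : 0 < c := lt_of_le_of_lt hb hc.1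
  have hca : c ≤ a := hc.2.le
  have h1 : a ^ (q - 1) ≤ c ^ (q - 1) :=
    Real.rpow_le_rpow_of_nonpos hc0 hca (by linarith)
  have hab : 0 < a - b := by linarith
  have := hceq
  have h2 : a ^ q - b ^ q = q * c ^ (q - 1) * (a - b) := by
    field_simp at this
    linarith [this]
  rw [h2]
  nlinarith [mul_nonneg (mul_nonneg hq0.le hab.le) (sub_nonneg.mpr h1)]

/-- For `0 ≤ b ≤ a`, `1 < p < 2`:
`(p-1) * (a-b)^2 * (a+b)^(p-2) ≤ (a^(p-2)*a - b^(p-2)*b) * (a - b)`. -/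
private lemma lemB {p a b : ℝ} (hp1 : 1 < p) (hp2 : p < 2) (hb : 0 ≤ b) (hba : b ≤ a) :
    (p - 1) * (a - b) ^ 2 * (a + b) ^ (p - 2) ≤ (a ^ (p - 2) * a - b ^ (p - 2) * b) * (a - b) := by
  rcases eq_or_lt_of_le (hb.trans hba) with h | ha
  · have hb0 : b = 0 := le_antisymm (hba.trans h.symm.le) hb
    simp [← h, hb0]
  -- a > 0
  have hq0 : 0 < p - 1 := by linarith
  have hq1 : p - 1 < 1 := by linarith
  have hA : a ^ (p - 2) * a = a ^ (p - 1) := by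
    rw [show p - 1 = (p - 2) + 1 by ring, Real.rpow_add ha, Real.rpow_one]
  have hB : b ^ (p - 2) * b = b ^ (p - 1) := by
    rcases eq_or_lt_of_le hb with rfl | hb0
    · simp [Real.zero_rpow (by intro h; linarith [h] : p - 1 ≠ 0)]
    · rw [show p - 1 = (p - 2) + 1 by ring, Real.rpow_add hb0, Real.rpow_one]
  rw [hA, hB]
  have habnn : 0 ≤ a - b := sub_nonneg.mpr hba
  have key : (p - 1) * (a - b) * (a + b) ^ (p - 2) ≤ a ^ (p - 1) - b ^ (p - 1) := by
    have h1 : (a + b) ^ (p - 2) ≤ a ^ (p - 2) :=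
      Real.rpow_le_rpow_of_nonpos ha (by linarith) (by linarith)
    have h2 : (p - 1) * (a - b) * a ^ ((p - 1) - 1) ≤ a ^ (p - 1) - b ^ (p - 1) :=
      lemA hq0 hq1 hb hba
    have : (p - 1) - 1 = p - 2 := by ring
    rw [this] at h2
    have hq0' : (0:ℝ) ≤ p - 1 := hq0.le
    nlinarith [mul_nonneg (mul_nonneg hq0' habnn) (sub_nonneg.mpr h1)]
  nlinarith [key]

/-- The core scalar inequality. -/
private lemma keylem {p a b t : ℝ} (hp1 : 1 < p) (hp2 : p < 2) (ha : 0 ≤ a) (hb : 0 ≤ b)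
    (ht : |t| ≤ a * b) :
    (p - 1) * (a ^ 2 + b ^ 2 - 2 * t) * (a + b) ^ (p - 2) ≤
      a ^ (p - 2) * a ^ 2 + b ^ (p - 2) * b ^ 2 - (a ^ (p - 2) + b ^ (p - 2)) * t := by
  have ht1 : t ≤ a * b := le_of_abs_le ht
  have ht2 : -(a * b) ≤ t := neg_le_of_abs_le ht
  -- slope comparison: a^(p-2) + b^(p-2) ≥ 2(p-1)(a+b)^(p-2)  (when a+b>0)
  rcases eq_or_lt_of_le (add_nonneg ha hb) with hab0 | hab
  · have ha0 : a = 0 := by linarith [hb]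
    have hb0 : b = 0 := by linarith [ha]
    have ht0 : t = 0 := by
      have : |t| ≤ 0 := by rw [ha0, hb0] at ht; simpa using ht
      exact abs_nonpos_iff.mp this
    simp [ha0, hb0, ht0, Real.zero_rpow (by intro h; linarith [h] : p - 2 ≠ 0)]
  have hz : (0:ℝ) ^ (p - 2) = 0 := Real.zero_rpow (by intro h; linarith [h])
  rcases eq_or_lt_of_le ha with rfl | ha0
  · have ht0 : t = 0 := abs_nonpos_iff.mp (by simpa using ht)
    have hbp : (0:ℝ) ≤ b ^ (p - 2) := Real.rpow_nonneg hb _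
    simp only [ht0, hz, zero_add]
    nlinarith [mul_nonneg hbp (sq_nonneg b)]
  rcases eq_or_lt_of_le hb with rfl | hb0
  · have ht0 : t = 0 := abs_nonpos_iff.mp (by simpa using ht)
    have hap : (0:ℝ) ≤ a ^ (p - 2) := Real.rpow_nonneg ha _
    simp only [ht0, hz, add_zero]
    nlinarith [mul_nonneg hap (sq_nonneg a)]
  have slope : 2 * (p - 1) * (a + b) ^ (p - 2) ≤ a ^ (p - 2) + b ^ (p - 2) := by
    have h1 : (a + b) ^ (p - 2) ≤ a ^ (p - 2) :=
      Real.rpow_le_rpow_of_nonpos ha0 (by linarith) (by linarith)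
    have h2 : (a + b) ^ (p - 2) ≤ b ^ (p - 2) :=
      Real.rpow_le_rpow_of_nonpos hb0 (by linarith) (by linarith)
    have h3 : 0 < (a + b) ^ (p - 2) := Real.rpow_pos_of_pos hab _
    nlinarith [h1, h2, h3]
  -- value at t = a*b
  have atab : (p - 1) * (a ^ 2 + b ^ 2 - 2 * (a * b)) * (a + b) ^ (p - 2) ≤
      a ^ (p - 2) * a ^ 2 + b ^ (p - 2) * b ^ 2 - (a ^ (p - 2) + b ^ (p - 2)) * (a * b) := by
    rcases le_total b a with hba | hab'
    · have := lemB hp1 hp2 hb hba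
      nlinarith [this]
    · have := lemB hp1 hp2 ha hab'
      have hcomm : b + a = a + b := by ring
      rw [hcomm] at this
      nlinarith [this]
  have hABpos : (0:ℝ) < (a + b) ^ (p - 2) := Real.rpow_pos_of_pos hab _
  nlinarith [slope, atab, mul_nonneg (sub_nonneg.mpr ht1) (sub_nonneg.mpr (le_of_lt hABpos)),
    mul_le_mul_of_nonneg_left (sub_nonneg.mpr ht1) (le_of_lt hABpos),
    mul_nonneg (sub_nonneg.mpr ht1)
      (sub_nonneg.mpr slope)]

/-- Monotonicity of the p-Laplacian vector field for `1 < p < 2`: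
`⟨|x|^{p-2}x - |y|^{p-2}y, x - y⟩ ≥ c_p |x-y|² (|x|+|y|)^{p-2}`. -/
theorem stmt7 (n : ℕ) (p : ℝ) (hp1 : 1 < p) (hp2 : p < 2) :
    ∃ c : ℝ, 0 < c ∧ ∀ x y : EuclideanSpace ℝ (Fin n),
      c * ‖x - y‖ ^ 2 * (‖x‖ + ‖y‖) ^ (p - 2) ≤
        (inner ℝ (‖x‖ ^ (p - 2) • x - ‖y‖ ^ (p - 2) • y) (x - y) : ℝ) := by
  refine ⟨p - 1, by linarith, fun x y => ?_⟩
  set a := ‖x‖ with ha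
  set b := ‖y‖ with hb
  set t : ℝ := inner ℝ x y with htdef
  have hinner : (inner ℝ (a ^ (p - 2) • x - b ^ (p - 2) • y) (x - y) : ℝ) =
      a ^ (p - 2) * a ^ 2 + b ^ (p - 2) * b ^ 2 - (a ^ (p - 2) + b ^ (p - 2)) * t := by
    simp only [inner_sub_left, inner_sub_right, real_inner_smul_left,
      real_inner_self_eq_norm_sq, ← ha, ← hb, ← htdef]
    rw [real_inner_comm x y]
    ring
  have hns : ‖x - y‖ ^ 2 = a ^ 2 + b ^ 2 - 2 * t := by
    rw [norm_sub_sq_real]; ring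
  rw [hinner, hns]
  exact keylem hp1 hp2 (norm_nonneg x) (norm_nonneg y) (abs_real_inner_le_norm x y)
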